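/- Let C be a conjugation on a complex Hilbert space H, T ∈ B(H) with C T C = −T*, and λ ∈ ℂ. Then T − λ is bounded below (i.e., there exists c > 0 with ‖(T − λ)x‖ ≥ c‖x‖ for all x) if and only if T + λ is surjective. Consequently σ_π(T) = −σ_δ(T), where σ_π is the approximate point spectrum and σ_δ(T) = {z : T − z is not surjective}. -/

import Mathlib

open scoped InnerProductSpace


open ContinuousLinearMap

lemma surj_iff_adj_bdd {H : Type*} [NormedAddCommGroup H]
    [InnerProductSpace ℂ H] [CompleteSpace H] (A : H →L[ℂ] H) :
    Function.Surjective ⇑A ↔ ∃ c > 0, ∀ x : H, c * ‖x‖ ≤ ‖A.adjoint x‖ := by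
  constructor
  · intro hs
    obtain ⟨M, hM, h⟩ := A.exists_preimage_norm_le hs
    refine ⟨M⁻¹, by positivity, fun u => ?_⟩
    obtain ⟨x, hx, hxn⟩ := h u
    rcases eq_or_ne u 0 with rfl | hu
    · simp
    · have h1 : ‖u‖ ^ 2 = RCLike.re ⟪A.adjoint u, x⟫_ℂ := by
        rw [ContinuousLinearMap.adjoint_inner_left, hx, inner_self_eq_norm_sq]
      have h2 : RCLike.re ⟪A.adjoint u, x⟫_ℂ ≤ ‖A.adjoint u‖ * ‖x‖ :=
        (RCLike.re_le_norm _).trans (norm_inner_le_norm _ _)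
      have h3 : ‖u‖ ^ 2 ≤ ‖A.adjoint u‖ * (M * ‖u‖) := by
        refine (h1 ▸ h2).trans ?_
        exact mul_le_mul_of_nonneg_left hxn (norm_nonneg _)
      have hu' : 0 < ‖u‖ := norm_pos_iff.mpr hu
      rw [inv_mul_le_iff₀ hM]
      nlinarith
  · rintro ⟨c, hc, hb⟩
    -- S = A ∘ A† is bijective
    set S : H →L[ℂ] H := A ∘L A.adjoint with hS
    have hSb : ∀ x, c ^ 2 * ‖x‖ ≤ ‖S x‖ := by
      intro x
      rcases eq_or_ne x 0 with rfl | hx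
      · simp
      have hx' : 0 < ‖x‖ := norm_pos_iff.mpr hx
      have h1 : ‖A.adjoint x‖ ^ 2 = RCLike.re ⟪S x, x⟫_ℂ := by
        simp only [hS, ContinuousLinearMap.coe_comp', Function.comp_apply]
        rw [← ContinuousLinearMap.adjoint_inner_right, inner_self_eq_norm_sq]
      have h2 : RCLike.re ⟪S x, x⟫_ℂ ≤ ‖S x‖ * ‖x‖ :=
        (RCLike.re_le_norm _).trans (norm_inner_le_norm _ _)
      have h3 := hb x
      have : (c * ‖x‖) ^ 2 ≤ ‖S x‖ * ‖x‖ := by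
        calc (c * ‖x‖) ^ 2 ≤ ‖A.adjoint x‖ ^ 2 := by
              apply pow_le_pow_left₀ (by positivity) h3
          _ ≤ ‖S x‖ * ‖x‖ := h1 ▸ h2
      nlinarith
    have hanti : AntilipschitzWith (⟨c ^ 2, by positivity⟩ : NNReal)⁻¹ S := by
      apply S.antilipschitz_of_bound
      intro x
      push_cast
      calc ‖x‖ = (c ^ 2)⁻¹ * (c ^ 2 * ‖x‖) := by field_simp
        _ ≤ (c ^ 2)⁻¹ * ‖S x‖ := by gcongr; exact hSb x
    have hdense : S.range.topologicalClosure = ⊤ := by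
      rw [Submodule.topologicalClosure_eq_top_iff, Submodule.eq_bot_iff]
      intro x hx
      have h0 : ⟪S x, x⟫_ℂ = 0 := (Submodule.mem_orthogonal _ _).1 hx (S x) ⟨x, rfl⟩
      simp only [hS, ContinuousLinearMap.coe_comp', Function.comp_apply] at h0
      rw [← ContinuousLinearMap.adjoint_inner_right] at h0
      have hz : A.adjoint x = 0 := inner_self_eq_zero.mp h0
      have h4 := hb x
      rw [hz, norm_zero] at h4
      have := norm_nonneg x
      rw [← norm_eq_zero]
      nlinarith
    have hbij : Function.Bijective S :=
      (S.bijective_iff_dense_range_and_antilipschitz).mpr ⟨hdense, _, hanti⟩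
    intro y
    obtain ⟨z, hz⟩ := hbij.2 y
    exact ⟨A.adjoint z, hz⟩

theorem bounded_below_iff_surjective_of_skew {H : Type*} [NormedAddCommGroup H]
    [InnerProductSpace ℂ H] [CompleteSpace H] (C : H → H)
    (hadd : ∀ x y, C (x + y) = C x + C y)
    (hsmul : ∀ (a : ℂ) (x : H), C (a • x) = (starRingEnd ℂ a) • C x)
    (hinv : ∀ x, C (C x) = x)
    (hC : ∀ x y, ⟪C x, C y⟫_ℂ = ⟪y, x⟫_ℂ)
    (T : H →L[ℂ] H)
    (hT : ∀ x, C (T (C x)) = -(ContinuousLinearMap.adjoint T) x) :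
    (∀ lam : ℂ,
      ((∃ c > 0, ∀ x : H, c * ‖x‖ ≤ ‖(T - lam • (1 : H →L[ℂ] H)) x‖) ↔
        Function.Surjective ⇑(T + lam • (1 : H →L[ℂ] H)))) ∧
    {z : ℂ | ¬ ∃ c > 0, ∀ x : H, c * ‖x‖ ≤ ‖(T - z • (1 : H →L[ℂ] H)) x‖}
      = -{z : ℂ | ¬ Function.Surjective ⇑(T - z • (1 : H →L[ℂ] H))} := by
  have hnorm : ∀ x, ‖C x‖ = ‖x‖ := by
    intro x
    have h1 : RCLike.re ⟪C x, C x⟫_ℂ = RCLike.re ⟪x, x⟫_ℂ := by rw [hC]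
    rw [inner_self_eq_norm_sq, inner_self_eq_norm_sq] at h1
    have := norm_nonneg (C x); have := norm_nonneg x
    nlinarith
  have hsub : ∀ a b, C (a - b) = C a - C b := by
    intro a b
    have : a - b = a + (-1 : ℂ) • b := by simp [sub_eq_add_neg]
    rw [this, hadd, hsmul]
    simp [sub_eq_add_neg]
  have hadj : ∀ lam : ℂ, ContinuousLinearMap.adjoint (T + lam • (1 : H →L[ℂ] H)) =
      ContinuousLinearMap.adjoint T + (starRingEnd ℂ lam) • (1 : H →L[ℂ] H) := by
    intro lam
    rw [map_add, LinearIsometryEquiv.map_smulₛₗ, ContinuousLinearMap.one_def, ContinuousLinearMap.adjoint_id]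
  have key : ∀ (lam : ℂ) (x : H),
      C ((T - lam • (1 : H →L[ℂ] H)) (C x)) =
        -(ContinuousLinearMap.adjoint (T + lam • (1 : H →L[ℂ] H)) x) := by
    intro lam x
    rw [hadj]
    simp only [ContinuousLinearMap.sub_apply, ContinuousLinearMap.smul_apply,
      ContinuousLinearMap.one_apply, ContinuousLinearMap.add_apply]
    rw [hsub, hT, hsmul, hinv]
    abel
  have keynorm : ∀ (lam : ℂ) (x : H),
      ‖(T - lam • (1 : H →L[ℂ] H)) (C x)‖ =
        ‖ContinuousLinearMap.adjoint (T + lam • (1 : H →L[ℂ] H)) x‖ := by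
    intro lam x
    rw [← hnorm ((T - lam • (1 : H →L[ℂ] H)) (C x)), key, norm_neg]
  have main : ∀ lam : ℂ,
      ((∃ c > 0, ∀ x : H, c * ‖x‖ ≤ ‖(T - lam • (1 : H →L[ℂ] H)) x‖) ↔
        Function.Surjective ⇑(T + lam • (1 : H →L[ℂ] H))) := by
    intro lam
    rw [surj_iff_adj_bdd]
    constructor
    · rintro ⟨c, hc, h⟩
      refine ⟨c, hc, fun x => ?_⟩
      rw [← keynorm, ← hnorm x]
      exact h (C x)
    · rintro ⟨c, hc, h⟩
      refine ⟨c, hc, fun x => ?_⟩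
      have := h (C x)
      rw [← keynorm, hinv, hnorm] at this
      exact this
  refine ⟨main, ?_⟩
  ext z
  simp only [Set.mem_neg, Set.mem_setOf_eq]
  rw [main z]
  have : T - (-z) • (1 : H →L[ℂ] H) = T + z • (1 : H →L[ℂ] H) := by
    rw [neg_smul, sub_neg_eq_add]
  rw [this]
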